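/- For a computable (or merely arbitrary) tree T ⊆ ω^{<ω}, the structure A(T) = (G, (f_a)_{a∈G}) has a non-trivial automorphism if and only if T has an infinite path. -/

import Mathlib

open scoped symmDiff

/-- `RankGE succ o x` means the tree rank of `x` (w.r.t. successor relation `succ`)
is at least `o`; unranked nodes (`rk = ∞`) satisfy this for every ordinal. -/
def RankGE {α : Type*} (succ : α → α → Prop) (o : Ordinal) (x : α) : Prop :=
  ∀ β < o, ∃ y, succ x y ∧ RankGE succ β y
termination_by o

/-- `T` is a subtree of `ω^{<ω}`: closed under initial segments. -/
def IsTree (T : Set (List ℕ)) : Prop := ∀ s t : List ℕ, s <+: t → t ∈ T → s ∈ T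

/-- `τ` is an immediate successor of `σ` in `T`. -/
def TSucc (T : Set (List ℕ)) (σ τ : List ℕ) : Prop := τ ∈ T ∧ ∃ k : ℕ, τ = σ ++ [k]

instance : Std.Commutative (α := Finset (List ℕ)) (· ∆ ·) := ⟨fun a b => symmDiff_comm a b⟩
instance : Std.Associative (α := Finset (List ℕ)) (· ∆ ·) := ⟨fun a b c => symmDiff_assoc a b c⟩

/-- The predecessor map: the symmetric-difference sum of the singletons of the
`T`-predecessors of the members of `a`. -/
def pmap (a : Finset (List ℕ)) : Finset (List ℕ) :=
  Finset.fold (· ∆ ·) ∅ (fun t => {t.dropLast}) a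

/-- The carrier `G = ⋃ₙ Gₙ`: an element of `Gₙ` is a pair `(n, a)` with `a` a finite
subset of the level-`n` nodes of `T`; `(n, ∅)` is the identity `idₙ` of `Gₙ`. -/
def Gset (T : Set (List ℕ)) : Set (ℕ × Finset (List ℕ)) :=
  {x | ∀ t ∈ x.2, t ∈ T ∧ t.length = x.1}

/-- The operations `f_a`: `fA a b = a* ∆ b*` where `a*`, `b*` are the iterated
predecessors of `a`, `b` down to the minimum of their levels. -/
def fA (x y : ℕ × Finset (List ℕ)) : ℕ × Finset (List ℕ) :=
  (min x.1 y.1, (pmap^[x.1 - min x.1 y.1] x.2) ∆ (pmap^[y.1 - min x.1 y.1] y.2))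

/-- An automorphism of the structure `A(T) = (G, (f_a)_{a ∈ G})`: a bijection of `G`
commuting with each of the named unary operations `f_a`. -/
def IsAuto (T : Set (List ℕ)) (g : ℕ × Finset (List ℕ) → ℕ × Finset (List ℕ)) : Prop :=
  Set.BijOn g (Gset T) (Gset T) ∧ ∀ a ∈ Gset T, ∀ b ∈ Gset T, g (fA a b) = fA a (g b)

lemma aux_pmap_empty : pmap ∅ = ∅ := Finset.fold_empty

lemma aux_pmap_insert {a : List ℕ} {s : Finset (List ℕ)} (h : a ∉ s) :
    pmap (insert a s) = {a.dropLast} ∆ pmap s := Finset.fold_insert h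

lemma aux_sd_empty (s : Finset (List ℕ)) : s ∆ ∅ = s := by
  rw [← Finset.bot_eq_empty, symmDiff_bot]

lemma aux_empty_sd (s : Finset (List ℕ)) : ∅ ∆ s = s := by
  rw [← Finset.bot_eq_empty, bot_symmDiff]

lemma aux_sd_self (s : Finset (List ℕ)) : s ∆ s = ∅ := by
  rw [symmDiff_self, Finset.bot_eq_empty]

lemma aux_sd_cancel (s t : Finset (List ℕ)) : s ∆ (s ∆ t) = t :=
  symmDiff_symmDiff_cancel_left s t

lemma aux_mem_pmap {s : Finset (List ℕ)} {t : List ℕ} (h : t ∈ pmap s) :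
    ∃ u ∈ s, u.dropLast = t := by
  induction s using Finset.induction_on with
  | empty => simp [aux_pmap_empty] at h
  | insert a s ha ih =>
    rw [aux_pmap_insert ha, Finset.mem_symmDiff] at h
    rcases h with ⟨h1, _⟩ | ⟨h1, _⟩
    · exact ⟨_, Finset.mem_insert_self _ _, (Finset.mem_singleton.mp h1).symm⟩
    · obtain ⟨u, hu, hu2⟩ := ih h1
      exact ⟨u, Finset.mem_insert_of_mem hu, hu2⟩

lemma aux_pmap_sd_singleton (s : Finset (List ℕ)) (t : List ℕ) :
    pmap (s ∆ {t}) = pmap s ∆ {t.dropLast} := by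
  by_cases h : t ∈ s
  · have h1 : s ∆ {t} = s.erase t := by
      ext x
      simp only [Finset.mem_symmDiff, Finset.mem_singleton, Finset.mem_erase]
      constructor
      · rintro (⟨hx, hx2⟩ | ⟨rfl, hx2⟩) <;> tauto
      · tauto
    have h2 : pmap s = {t.dropLast} ∆ pmap (s.erase t) := by
      conv_lhs => rw [← Finset.insert_erase h]
      exact aux_pmap_insert (Finset.notMem_erase _ _)
    rw [h1, h2, symmDiff_assoc, symmDiff_comm (pmap _), aux_sd_cancel]
  · have h1 : s ∆ {t} = insert t s := by
      ext x
      simp only [Finset.mem_symmDiff, Finset.mem_singleton, Finset.mem_insert]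
      constructor
      · rintro (⟨hx, hx2⟩ | ⟨rfl, hx2⟩) <;> tauto
      · rintro (rfl | hx)
        · tauto
        · exact Or.inl ⟨hx, fun hxt => h (hxt ▸ hx)⟩
    rw [h1, aux_pmap_insert h, symmDiff_comm]

lemma aux_iter_pmap_empty (j : ℕ) : pmap^[j] ∅ = ∅ := by
  induction j with
  | zero => rfl
  | succ j ih => rw [Function.iterate_succ_apply', ih, aux_pmap_empty]

lemma aux_id_mem (T : Set (List ℕ)) (n : ℕ) : (n, (∅ : Finset (List ℕ))) ∈ Gset T := by
  intro t ht; simp at ht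

lemma aux_iter_pmap_gset {T : Set (List ℕ)} (hT : IsTree T) {n : ℕ} {s : Finset (List ℕ)}
    (hs : ∀ t ∈ s, t ∈ T ∧ t.length = n) {j : ℕ} (hj : j ≤ n) :
    ∀ t ∈ pmap^[j] s, t ∈ T ∧ t.length = n - j := by
  induction j with
  | zero => simpa using hs
  | succ j ih =>
    intro t ht
    rw [Function.iterate_succ_apply'] at ht
    obtain ⟨u, hu, rfl⟩ := aux_mem_pmap ht
    obtain ⟨huT, hulen⟩ := ih (Nat.le_of_succ_le hj) u hu
    refine ⟨hT _ _ (List.dropLast_prefix u) huT, ?_⟩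
    rw [List.length_dropLast, hulen]
    omega

lemma aux_fA_id_left {n : ℕ} (b : ℕ × Finset (List ℕ)) (hb : n ≤ b.1) :
    fA (n, (∅ : Finset (List ℕ))) b = (n, pmap^[b.1 - n] b.2) := by
  simp [fA, min_eq_left hb, aux_iter_pmap_empty, aux_empty_sd]

lemma aux_fA_self (b : ℕ × Finset (List ℕ)) : fA b b = (b.1, ∅) := by
  simp [fA, aux_sd_self]

lemma aux_path_exists {T : Set (List ℕ)} (hT : IsTree T) (c : ℕ → Finset (List ℕ))
    (hc : ∀ n, ∀ t ∈ c n, t ∈ T ∧ t.length = n)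
    (hp : ∀ n, c n = pmap (c (n + 1))) (N : ℕ) (hN : c N ≠ ∅) :
    ∃ f : ℕ → ℕ, ∀ n, List.ofFn (fun i : Fin n => f i) ∈ T := by
  -- nonemptiness propagates upward
  have hne : ∀ m, c (N + m) ≠ ∅ := by
    intro m
    induction m with
    | zero => simpa using hN
    | succ m ih =>
      intro h
      apply ih
      rw [hp (N + m), show N + m + 1 = N + (m + 1) by ring, h, aux_pmap_empty]
  have hext : ∀ m, ∀ t ∈ c m, ∃ u, u ∈ c (m + 1) ∧ u.dropLast = t := by
    intro m t ht
    rw [hp m] at ht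
    obtain ⟨u, hu, h2⟩ := aux_mem_pmap ht
    exact ⟨u, hu, h2⟩
  choose! F hF1 hF2 using hext
  obtain ⟨t0, ht0⟩ := Finset.nonempty_iff_ne_empty.mpr (hne 0)
  rw [Nat.add_zero] at ht0
  -- build the chain
  let σ : ℕ → List ℕ := fun k => Nat.rec t0 (fun k ih => F (N + k) ih) k
  have hσ0 : σ 0 = t0 := rfl
  have hσs : ∀ k, σ (k + 1) = F (N + k) (σ k) := fun k => rfl
  have hσmem : ∀ k, σ k ∈ c (N + k) := by
    intro k
    induction k with
    | zero => simpa [hσ0] using ht0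
    | succ k ih =>
      rw [hσs, show N + (k + 1) = N + k + 1 by ring]
      exact hF1 (N + k) (σ k) ih
  have hσdrop : ∀ k, (σ (k + 1)).dropLast = σ k := fun k => hF2 (N + k) (σ k) (hσmem k)
  have hσlen : ∀ k, (σ k).length = N + k := fun k => (hc _ _ (hσmem k)).2
  have hσT : ∀ k, σ k ∈ T := fun k => (hc _ _ (hσmem k)).1
  have hσpre : ∀ k m, k ≤ m → σ k <+: σ m := by
    intro k m hkm
    induction m with
    | zero => rw [Nat.le_zero.mp hkm]
    | succ m ih =>
      rcases Nat.lt_or_ge k (m + 1) with h | h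
      · exact (ih (Nat.lt_succ_iff.mp h)).trans
          ((hσdrop m) ▸ List.dropLast_prefix (σ (m + 1)))
      · rw [Nat.le_antisymm hkm h]
  refine ⟨fun i => (σ (i + 1)).getD i 0, fun n => ?_⟩
  have key : List.ofFn (fun i : Fin n => (σ (i + 1)).getD (i : ℕ) 0) = (σ n).take n := by
    apply List.ext_getElem
    · rw [List.length_ofFn, List.length_take, hσlen]; omega
    · intro i h1 h2
      have hi : i < n := by simpa using h1
      have hilen : i < (σ (i + 1)).length := by have := hσlen (i + 1); omega
      rw [List.getElem_ofFn, List.getElem_take]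
      have hpre := hσpre (i + 1) n hi
      rw [List.getD_eq_getElem _ _ hilen]
      exact List.IsPrefix.getElem hpre hilen
  rw [key]
  exact hT _ _ (List.take_prefix n (σ n)) (hσT n)

lemma aux_iter_pmap_sd {σ : ℕ → List ℕ} (hσd : ∀ m, (σ (m + 1)).dropLast = σ m)
    {n j : ℕ} (hj : j ≤ n) (s : Finset (List ℕ)) :
    pmap^[j] (s ∆ {σ n}) = pmap^[j] s ∆ {σ (n - j)} := by
  induction j with
  | zero => simp
  | succ j ih =>
    rw [Function.iterate_succ_apply', ih (by omega), aux_pmap_sd_singleton,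
      Function.iterate_succ_apply']
    congr 2
    have h1 : n - j = (n - (j + 1)) + 1 := by omega
    rw [h1, hσd]

lemma aux_backward {T : Set (List ℕ)} (hT : IsTree T) (f : ℕ → ℕ)
    (hf : ∀ n, List.ofFn (fun i : Fin n => f i) ∈ T) :
    ∃ g, IsAuto T g ∧ ∃ x ∈ Gset T, g x ≠ x := by
  set σ : ℕ → List ℕ := fun n => List.ofFn (fun i : Fin n => f i) with hσ
  have hσlen : ∀ n, (σ n).length = n := fun n => List.length_ofFn
  have hσT : ∀ n, σ n ∈ T := hf
  have hσd : ∀ m, (σ (m + 1)).dropLast = σ m := by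
    intro m
    rw [hσ]
    simp only
    rw [List.ofFn_succ']
    rw [List.concat_eq_append, List.dropLast_concat]
    congr 1
  refine ⟨fun x => (x.1, x.2 ∆ {σ x.1}), ⟨⟨?_, ?_, ?_⟩, ?_⟩, (0, ∅), aux_id_mem T 0, ?_⟩
  · -- MapsTo
    intro x hx t ht
    rw [Finset.mem_symmDiff] at ht
    rcases ht with ⟨h1, _⟩ | ⟨h1, _⟩
    · exact hx t h1
    · rw [Finset.mem_singleton] at h1
      subst h1
      exact ⟨hσT _, hσlen _⟩
  · -- InjOn
    intro x _ y _ hxy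
    simp only [Prod.mk.injEq] at hxy
    obtain ⟨h1, h2⟩ := hxy
    rw [h1] at h2
    have := congrArg (· ∆ ({σ y.1} : Finset (List ℕ))) h2
    simp only [symmDiff_assoc, aux_sd_self, aux_sd_empty] at this
    exact Prod.ext h1 this
  · -- SurjOn
    intro y hy
    refine ⟨(y.1, y.2 ∆ {σ y.1}), ?_, ?_⟩
    · intro t ht
      rw [Finset.mem_symmDiff] at ht
      rcases ht with ⟨h1, _⟩ | ⟨h1, _⟩
      · exact hy t h1
      · rw [Finset.mem_singleton] at h1
        subst h1
        exact ⟨hσT _, hσlen _⟩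
    · simp [symmDiff_assoc, aux_sd_self, aux_sd_empty]
  · -- commuting
    intro a _ b _
    simp only [fA]
    have hkey := aux_iter_pmap_sd hσd (Nat.sub_le b.1 (min a.1 b.1)) b.2
    have h1 : b.1 - (b.1 - min a.1 b.1) = min a.1 b.1 := by omega
    rw [h1] at hkey
    simp only [hkey]
    rw [symmDiff_assoc]
  · -- nontrivial
    simp only [ne_eq, Prod.mk.injEq]
    rintro ⟨-, h⟩
    rw [aux_empty_sd] at h
    exact Finset.singleton_ne_empty _ h

lemma aux_forward {T : Set (List ℕ)} (hT : IsTree T)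
    (g : ℕ × Finset (List ℕ) → ℕ × Finset (List ℕ)) (hg : IsAuto T g)
    (x : ℕ × Finset (List ℕ)) (hx : x ∈ Gset T) (hgx : g x ≠ x) :
    ∃ f : ℕ → ℕ, ∀ n, List.ofFn (fun i : Fin n => f i) ∈ T := by
  obtain ⟨⟨hmapsto, hinj, hsurj⟩, hcomm⟩ := hg
  -- g preserves levels
  have hlev : ∀ b ∈ Gset T, (g b).1 = b.1 := by
    intro b hb
    have hb' : fA (b.1, ∅) b = b := by
      simp [fA, aux_iter_pmap_empty, aux_empty_sd]
    have e1 := hcomm (b.1, ∅) (aux_id_mem T b.1) b hb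
    rw [hb'] at e1
    have hm : (g b).1 = min b.1 (g b).1 := congrArg Prod.fst e1
    have hmle : (g b).1 ≤ b.1 := hm.le.trans (min_le_left _ _)
    have e2 := hcomm ((g b).1, ∅) (aux_id_mem T (g b).1) b hb
    have e3 : fA ((g b).1, ∅) (g b) = g b := by
      simp [fA, aux_iter_pmap_empty, aux_empty_sd]
    rw [e3] at e2
    have hfAmem : fA ((g b).1, ∅) b ∈ Gset T := by
      rw [aux_fA_id_left b hmle]
      intro t ht
      obtain ⟨h1, h2⟩ := aux_iter_pmap_gset hT hb (Nat.sub_le b.1 (g b).1) t ht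
      exact ⟨h1, by simp only at h2 ⊢; omega⟩
    have e4 : fA ((g b).1, ∅) b = b := hinj hfAmem hb e2
    have e5 : min (g b).1 b.1 = b.1 := congrArg Prod.fst e4
    omega
  set c : ℕ → Finset (List ℕ) := fun n => (g (n, ∅)).2 with hcdef
  have hgid : ∀ n, g (n, ∅) = (n, c n) := fun n =>
    Prod.ext (hlev _ (aux_id_mem T n)) rfl
  have hc : ∀ n, ∀ t ∈ c n, t ∈ T ∧ t.length = n := by
    intro n t ht
    have := hmapsto (aux_id_mem T n) t ht
    rw [hgid n] at this
    exact this
  have hgform : ∀ b ∈ Gset T, g b = (b.1, b.2 ∆ c b.1) := by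
    intro b hb
    have e := hcomm b hb b hb
    rw [aux_fA_self, hgid] at e
    have e2 : fA b (g b) = (b.1, b.2 ∆ (g b).2) := by
      simp [fA, hlev b hb]
    rw [e2, Prod.mk.injEq] at e
    have e3 : (g b).2 = b.2 ∆ c b.1 := by
      rw [e.2, aux_sd_cancel]
    exact Prod.ext (hlev b hb) e3
  have hp : ∀ n, c n = pmap (c (n + 1)) := by
    intro n
    have e := hcomm (n, ∅) (aux_id_mem T n) (n + 1, ∅) (aux_id_mem T (n + 1))
    rw [aux_fA_id_left (n + 1, (∅ : Finset (List ℕ))) (Nat.le_succ n), hgid (n + 1),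
      aux_fA_id_left (n + 1, c (n + 1)) (Nat.le_succ n)] at e
    simp only [Nat.add_sub_cancel_left, Function.iterate_one, aux_pmap_empty] at e
    rw [hgid n] at e
    exact congrArg Prod.snd e
  have hN : c x.1 ≠ ∅ := by
    intro h
    apply hgx
    rw [hgform x hx, h, aux_sd_empty]
  exact aux_path_exists hT c hc hp x.1 hN


theorem stmt_7 (T : Set (List ℕ)) (hT : IsTree T) :
    (∃ g, IsAuto T g ∧ ∃ x ∈ Gset T, g x ≠ x) ↔
      ∃ f : ℕ → ℕ, ∀ n, List.ofFn (fun i : Fin n => f i) ∈ T := by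
  constructor
  · rintro ⟨g, hg, x, hx, hgx⟩
    exact aux_forward hT g hg x hx hgx
  · rintro ⟨f, hf⟩
    exact aux_backward hT f hf
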